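/- arXiv:0907.0907 — 2 statements merged into one kernel-verified Lean document; each statement's English description precedes it below -/
import Mathlib

section
/- (Inserting a point creates only a constant number of new tiles.) Let P ⊆ U be finite and let p ∈ U \ P. Then the number of tiles of QT(P ∪ {p}) that are not tiles of QT(P) is at most 5, and the number of tiles of QT(P) that are not tiles of QT(P ∪ {p}) is at most 1. -/
/-- The unit square `U = [0,1) × [0,1)`. -/
def unitSq : Set (ℝ × ℝ) := Set.Ico (0 : ℝ) 1 ×ˢ Set.Ico (0 : ℝ) 1

/-- The square `[i/2^k, (i+1)/2^k) × [j/2^k, (j+1)/2^k)`. -/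
def canSq (k : ℕ) (i j : ℤ) : Set (ℝ × ℝ) :=
  Set.Ico ((i : ℝ) / 2 ^ k) (((i : ℝ) + 1) / 2 ^ k) ×ˢ
    Set.Ico ((j : ℝ) / 2 ^ k) (((j : ℝ) + 1) / 2 ^ k)

/-- `σ` is a canonical square of side length `2⁻ᵏ`: it has the form
`[i/2^k, (i+1)/2^k) × [j/2^k, (j+1)/2^k)` with `0 ≤ i, j < 2^k`
(so it is contained in the unit square). -/
def IsCanSqSide (k : ℕ) (σ : Set (ℝ × ℝ)) : Prop :=
  ∃ i j : ℤ, 0 ≤ i ∧ i < 2 ^ k ∧ 0 ≤ j ∧ j < 2 ^ k ∧ σ = canSq k i j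

/-- `σ` is a canonical square. -/
def IsCanSq (σ : Set (ℝ × ℝ)) : Prop := ∃ k : ℕ, IsCanSqSide k σ

/-- `q` is one of the four quadrants of the canonical square `σ`: if `σ` has side
length `2⁻ᵏ`, the quadrants are the canonical squares of side length `2⁻⁽ᵏ⁺¹⁾`
contained in `σ`. -/
def IsQuadrantOf (q σ : Set (ℝ × ℝ)) : Prop :=
  ∃ k : ℕ, IsCanSqSide k σ ∧ IsCanSqSide (k + 1) q ∧ q ⊆ σ

/-- `σ` is the smallest canonical square containing `S`: it is a canonical square,
it contains `S`, and it is contained in every canonical square containing `S`. -/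
def IsSmallestCanSq (S σ : Set (ℝ × ℝ)) : Prop :=
  IsCanSq σ ∧ S ⊆ σ ∧ ∀ τ : Set (ℝ × ℝ), IsCanSq τ → S ⊆ τ → σ ⊆ τ

open scoped Classical

/-- `smallestCanSq S`: the smallest canonical square containing `S` (junk value `∅` if none exists). -/
noncomputable def smallestCanSq (S : Set (ℝ × ℝ)) : Set (ℝ × ℝ) :=
  if h : ∃ σ : Set (ℝ × ℝ), IsSmallestCanSq S σ then h.choose else ∅

/-- A canonical square `σ` is critical for `P` if at least two of its four
quadrants contain a point of `P`. -/
def Critical (P σ : Set (ℝ × ℝ)) : Prop :=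
  IsCanSq σ ∧ ∃ q₁ q₂ : Set (ℝ × ℝ), IsQuadrantOf q₁ σ ∧ IsQuadrantOf q₂ σ ∧
    q₁ ≠ q₂ ∧ (P ∩ q₁).Nonempty ∧ (P ∩ q₂).Nonempty

/-- The tiles of the compressed quadtree map `QT(P)`: (i) `U` itself if `|P| ≤ 1`;
(ii) the annulus `U \ sq(P)` if `|P| ≥ 2` and `sq(P) ≠ U`; (iii) for every
canonical square `σ` critical for `P` and every quadrant `q` of `σ`: the square
`q` if `|P ∩ q| ≤ 1`, and the annulus `q \ sq(P ∩ q)` if `|P ∩ q| ≥ 2` and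
`sq(P ∩ q) ≠ q`. -/
noncomputable def QT (P : Set (ℝ × ℝ)) : Set (Set (ℝ × ℝ)) :=
  {f | (P.ncard ≤ 1 ∧ f = unitSq)
    ∨ (2 ≤ P.ncard ∧ smallestCanSq P ≠ unitSq ∧ f = unitSq \ smallestCanSq P)
    ∨ (∃ σ q : Set (ℝ × ℝ), Critical P σ ∧ IsQuadrantOf q σ ∧
        (((P ∩ q).ncard ≤ 1 ∧ f = q)
          ∨ (2 ≤ (P ∩ q).ncard ∧ smallestCanSq (P ∩ q) ≠ q ∧ f = q \ smallestCanSq (P ∩ q))))}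

lemma two_pow_pos' (k : ℕ) : (0:ℝ) < 2 ^ k := by positivity

def dIco (k : ℕ) (i : ℤ) : Set ℝ := Set.Ico ((i : ℝ) / 2 ^ k) (((i : ℝ) + 1) / 2 ^ k)

lemma mem_dIco {k : ℕ} {i : ℤ} {x : ℝ} :
    x ∈ dIco k i ↔ ⌊x * (2:ℝ) ^ k⌋ = i := by
  rw [dIco, Set.mem_Ico, div_le_iff₀ (two_pow_pos' k), lt_div_iff₀ (two_pow_pos' k),
    Int.floor_eq_iff]

lemma dIco_nonempty (k : ℕ) (i : ℤ) : ((i:ℝ)/2^k) ∈ dIco k i := by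
  refine ⟨le_refl _, ?_⟩
  rw [div_lt_div_iff₀ (two_pow_pos' k) (two_pow_pos' k)]
  nlinarith [two_pow_pos' k]

lemma dIco_subset_dIco {k k' : ℕ} {i i' : ℤ} (hkk : k' ≤ k) {x : ℝ}
    (hx : x ∈ dIco k i) (hx' : x ∈ dIco k' i') : dIco k i ⊆ dIco k' i' := by
  rw [mem_dIco] at hx hx'
  set m := k - k' with hm
  have hp : (2:ℝ) ^ k = 2 ^ m * 2 ^ k' := by rw [← pow_add]; congr 1; omega
  have hf1 : (i:ℝ) ≤ x * 2 ^ k := by rw [← hx]; exact Int.floor_le _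
  have hf2 : x * 2 ^ k < i + 1 := by rw [← hx]; push_cast; exact Int.lt_floor_add_one _
  have hg1 : (i':ℝ) ≤ x * 2 ^ k' := by rw [← hx']; exact Int.floor_le _
  have hg2 : x * 2 ^ k' < i' + 1 := by rw [← hx']; push_cast; exact Int.lt_floor_add_one _
  have h2m : (0:ℝ) < 2 ^ m := two_pow_pos' m
  have key1 : (i':ℝ) * 2 ^ m ≤ i := by
    have : (i':ℝ) * 2 ^ m ≤ x * 2 ^ k := by rw [hp]; nlinarith
    have hlt : (i':ℝ) * 2 ^ m < i + 1 := lt_of_le_of_lt this hf2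
    have : (i' * 2 ^ m : ℤ) < i + 1 := by exact_mod_cast (by push_cast; linarith : ((i' * 2^m : ℤ):ℝ) < ((i+1 : ℤ):ℝ))
    have : (i' * 2 ^ m : ℤ) ≤ i := by omega
    exact_mod_cast this
  have key2 : (i:ℝ) + 1 ≤ (i' + 1) * 2 ^ m := by
    have hx2 : x * 2 ^ k < (i' + 1) * 2 ^ m := by rw [hp]; nlinarith
    have : (i:ℝ) < (i' + 1) * 2 ^ m := lt_of_le_of_lt hf1 hx2
    have h1 : (i : ℤ) < (i' + 1) * 2 ^ m := by exact_mod_cast (by push_cast; linarith : ((i:ℤ):ℝ) < (((i'+1) * 2^m : ℤ):ℝ))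
    have : (i : ℤ) + 1 ≤ (i' + 1) * 2 ^ m := by omega
    exact_mod_cast this
  apply Set.Ico_subset_Ico
  · rw [div_le_div_iff₀ (two_pow_pos' k') (two_pow_pos' k), hp]
    nlinarith [mul_le_mul_of_nonneg_right key1 (le_of_lt (two_pow_pos' k'))]
  · rw [div_le_div_iff₀ (two_pow_pos' k) (two_pow_pos' k'), hp]
    nlinarith [mul_le_mul_of_nonneg_right key2 (le_of_lt (two_pow_pos' k'))]

lemma canSq_eq_prod (k : ℕ) (i j : ℤ) : canSq k i j = dIco k i ×ˢ dIco k j := rfl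

lemma mem_canSq {k : ℕ} {i j : ℤ} {x : ℝ × ℝ} :
    x ∈ canSq k i j ↔ ⌊x.1 * (2:ℝ) ^ k⌋ = i ∧ ⌊x.2 * (2:ℝ) ^ k⌋ = j := by
  rw [canSq_eq_prod, Set.mem_prod, mem_dIco, mem_dIco]

lemma canSq_nonempty (k : ℕ) (i j : ℤ) : (canSq k i j).Nonempty :=
  ⟨((i:ℝ)/2^k, (j:ℝ)/2^k), dIco_nonempty k i, dIco_nonempty k j⟩

/-- comparability: if two canonical squares share a point and the first has level ≥ the
second, the first is contained in the second. -/
lemma canSq_subset_canSq {k k' : ℕ} {i j i' j' : ℤ} (hkk : k' ≤ k) {x : ℝ × ℝ}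
    (hx : x ∈ canSq k i j) (hx' : x ∈ canSq k' i' j') : canSq k i j ⊆ canSq k' i' j' := by
  rw [canSq_eq_prod] at *
  exact Set.prod_mono (dIco_subset_dIco hkk hx.1 hx'.1) (dIco_subset_dIco hkk hx.2 hx'.2)

lemma unitSq_eq : unitSq = canSq 0 0 0 := by
  simp [unitSq, canSq]

lemma isCanSqSide_unitSq : IsCanSqSide 0 unitSq :=
  ⟨0, 0, le_refl _, by norm_num, le_refl _, by norm_num, unitSq_eq⟩

lemma isCanSq_unitSq : IsCanSq unitSq := ⟨0, isCanSqSide_unitSq⟩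

lemma dIco_subset_unit {k : ℕ} {i : ℤ} (hi0 : 0 ≤ i) (hi1 : i < 2 ^ k) :
    dIco k i ⊆ Set.Ico (0:ℝ) 1 := by
  have hk := two_pow_pos' k
  apply Set.Ico_subset_Ico
  · apply div_nonneg _ (le_of_lt hk)
    exact_mod_cast hi0
  · rw [div_le_one hk]
    have : ((i:ℝ) + 1) ≤ ((2^k : ℤ) : ℝ) := by exact_mod_cast (by omega : i + 1 ≤ (2:ℤ)^k)
    calc ((i:ℝ) + 1) ≤ ((2^k : ℤ) : ℝ) := this
      _ = 2^k := by push_cast; ring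

lemma canSqSide_subset_unitSq {k : ℕ} {σ : Set (ℝ × ℝ)} (h : IsCanSqSide k σ) :
    σ ⊆ unitSq := by
  obtain ⟨i, j, hi0, hi1, hj0, hj1, rfl⟩ := h
  rw [canSq_eq_prod, unitSq]
  exact Set.prod_mono (dIco_subset_unit hi0 hi1) (dIco_subset_unit hj0 hj1)

/-- The canonical square at level `k` containing `x`. -/
noncomputable def sqAt (k : ℕ) (x : ℝ × ℝ) : Set (ℝ × ℝ) :=
  canSq k ⌊x.1 * (2:ℝ)^k⌋ ⌊x.2 * (2:ℝ)^k⌋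

lemma mem_sqAt (k : ℕ) (x : ℝ × ℝ) : x ∈ sqAt k x := by
  rw [sqAt, mem_canSq]; exact ⟨rfl, rfl⟩

lemma canSq_eq_sqAt {k : ℕ} {i j : ℤ} {x : ℝ × ℝ} (hx : x ∈ canSq k i j) :
    canSq k i j = sqAt k x := by
  rw [mem_canSq] at hx
  rw [sqAt, hx.1, hx.2]

lemma isCanSqSide_sqAt {k : ℕ} {x : ℝ × ℝ} (hx : x ∈ unitSq) :
    IsCanSqSide k (sqAt k x) := by
  obtain ⟨⟨hx0, hx1⟩, ⟨hy0, hy1⟩⟩ := hx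
  have hk := two_pow_pos' k
  refine ⟨_, _, ?_, ?_, ?_, ?_, rfl⟩
  · exact Int.floor_nonneg.2 (by nlinarith)
  · rw [Int.floor_lt]; push_cast; nlinarith
  · exact Int.floor_nonneg.2 (by nlinarith)
  · rw [Int.floor_lt]; push_cast; nlinarith
/-- Same-level canonical squares through a common point coincide. -/
lemma canSq_eq_of_mem {k : ℕ} {i j i' j' : ℤ} {x : ℝ × ℝ}
    (h : x ∈ canSq k i j) (h' : x ∈ canSq k i' j') : canSq k i j = canSq k i' j' := by
  rw [canSq_eq_sqAt h, canSq_eq_sqAt h']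

lemma dIco_lt (k : ℕ) (i : ℤ) : (i:ℝ)/2^k < ((i:ℝ)+1)/2^k := by
  have hk := two_pow_pos' k
  rw [div_lt_div_iff₀ hk hk]; nlinarith

lemma dIco_inj {k k' : ℕ} {i i' : ℤ} (h : dIco k i = dIco k' i') : k = k' ∧ i = i' := by
  have hk := two_pow_pos' k
  have hk' := two_pow_pos' k'
  have h1 : (i:ℝ) * 2^k' = (i':ℝ) * 2^k := by
    have := congrArg sInf h
    rw [dIco, dIco, csInf_Ico (dIco_lt k i), csInf_Ico (dIco_lt k' i')] at this
    field_simp at this; linear_combination this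
  have h2 : ((i:ℝ)+1) * 2^k' = ((i':ℝ)+1) * 2^k := by
    have := congrArg sSup h
    rw [dIco, dIco, csSup_Ico (dIco_lt k i), csSup_Ico (dIco_lt k' i')] at this
    field_simp at this; linear_combination this
  have hpw : (2:ℝ)^k' = 2^k := by linear_combination h2 - h1
  have hkk : k' = k := by
    have h2n : ((2^k' : ℕ) : ℝ) = ((2^k : ℕ) : ℝ) := by push_cast; exact hpw
    exact Nat.pow_right_injective (by norm_num) (Nat.cast_injective h2n)
  subst hkk
  refine ⟨rfl, ?_⟩
  have : (i:ℝ) = i' := mul_right_cancel₀ (ne_of_gt hk) h1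
  exact_mod_cast this

lemma canSq_inj {k k' : ℕ} {i j i' j' : ℤ} (h : canSq k i j = canSq k' i' j') :
    k = k' ∧ i = i' ∧ j = j' := by
  rw [canSq_eq_prod, canSq_eq_prod,
    Set.prod_eq_prod_iff_of_nonempty (by
      rw [← canSq_eq_prod]; exact canSq_nonempty k i j)] at h
  obtain ⟨h1, h2⟩ := h
  obtain ⟨hk, hi⟩ := dIco_inj h1
  obtain ⟨-, hj⟩ := dIco_inj h2
  exact ⟨hk, hi, hj⟩

/-- The level of a canonical square is well-defined. -/
lemma level_unique {k k' : ℕ} {σ : Set (ℝ × ℝ)} (h : IsCanSqSide k σ)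
    (h' : IsCanSqSide k' σ) : k = k' := by
  obtain ⟨i, j, _, _, _, _, rfl⟩ := h
  obtain ⟨i', j', _, _, _, _, h⟩ := h'
  exact (canSq_inj h).1

/-- Two canonical squares sharing a point are comparable. -/
lemma canSq_comparable {σ τ : Set (ℝ × ℝ)} (hσ : IsCanSq σ) (hτ : IsCanSq τ)
    {x : ℝ × ℝ} (hxσ : x ∈ σ) (hxτ : x ∈ τ) : σ ⊆ τ ∨ τ ⊆ σ := by
  obtain ⟨k, i, j, _, _, _, _, rfl⟩ := hσ
  obtain ⟨k', i', j', _, _, _, _, rfl⟩ := hτ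
  rcases le_total k' k with h | h
  · exact Or.inl (canSq_subset_canSq h hxσ hxτ)
  · exact Or.inr (canSq_subset_canSq h hxτ hxσ)

/-- Side-version of comparability with levels. -/
lemma canSqSide_subset {k k' : ℕ} {σ τ : Set (ℝ × ℝ)} (hσ : IsCanSqSide k σ)
    (hτ : IsCanSqSide k' τ) (hkk : k' ≤ k) {x : ℝ × ℝ} (hxσ : x ∈ σ) (hxτ : x ∈ τ) :
    σ ⊆ τ := by
  obtain ⟨i, j, _, _, _, _, rfl⟩ := hσ
  obtain ⟨i', j', _, _, _, _, rfl⟩ := hτ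
  exact canSq_subset_canSq hkk hxσ hxτ

lemma canSqSide_mono_level {k k' : ℕ} {σ τ : Set (ℝ × ℝ)} (hσ : IsCanSqSide k σ)
    (hτ : IsCanSqSide k' τ) (hst : σ ⊆ τ) : k' ≤ k := by
  by_contra hlt
  push_neg at hlt
  obtain ⟨x, hx⟩ : σ.Nonempty := by
    obtain ⟨i, j, _, _, _, _, rfl⟩ := hσ; exact canSq_nonempty k i j
  have := canSqSide_subset hτ hσ (le_of_lt hlt) (hst hx) hx
  have : σ = τ := Set.Subset.antisymm hst this
  subst this
  exact absurd (level_unique hσ hτ) (by omega)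

lemma IsQuadrantOf.subset {q σ : Set (ℝ × ℝ)} (h : IsQuadrantOf q σ) : q ⊆ σ :=
  h.choose_spec.2.2

lemma IsQuadrantOf.isCanSq {q σ : Set (ℝ × ℝ)} (h : IsQuadrantOf q σ) : IsCanSq q :=
  ⟨_, h.choose_spec.2.1⟩

lemma IsQuadrantOf.isCanSq' {q σ : Set (ℝ × ℝ)} (h : IsQuadrantOf q σ) : IsCanSq σ :=
  ⟨_, h.choose_spec.1⟩

lemma exists_quadrant_mem {k : ℕ} {σ : Set (ℝ × ℝ)} (hσ : IsCanSqSide k σ)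
    {x : ℝ × ℝ} (hx : x ∈ σ) : ∃ q, IsQuadrantOf q σ ∧ x ∈ q := by
  have hxU : x ∈ unitSq := canSqSide_subset_unitSq hσ hx
  have hq : IsCanSqSide (k+1) (sqAt (k+1) x) := isCanSqSide_sqAt hxU
  have hxq : x ∈ sqAt (k+1) x := mem_sqAt _ _
  exact ⟨sqAt (k+1) x, ⟨k, hσ, hq, canSqSide_subset hq hσ (by omega) hxq hx⟩, hxq⟩

lemma quadrant_eq_of_mem {q q' σ : Set (ℝ × ℝ)} (h : IsQuadrantOf q σ)
    (h' : IsQuadrantOf q' σ) {x : ℝ × ℝ} (hx : x ∈ q) (hx' : x ∈ q') : q = q' := by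
  obtain ⟨k, hσ, hq, -⟩ := h
  obtain ⟨k', hσ', hq', -⟩ := h'
  have : k = k' := level_unique hσ hσ'
  subst this
  obtain ⟨i, j, _, _, _, _, rfl⟩ := hq
  obtain ⟨i', j', _, _, _, _, rfl⟩ := hq'
  exact canSq_eq_of_mem hx hx'

lemma subset_quadrant_of_ssubset {k m : ℕ} {σ τ : Set (ℝ × ℝ)} (hσ : IsCanSqSide k σ)
    (hτ : IsCanSqSide m τ) (hsub : τ ⊆ σ) (hne : τ ≠ σ) :
    ∃ q, IsQuadrantOf q σ ∧ τ ⊆ q := by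
  obtain ⟨x, hx⟩ : τ.Nonempty := by
    obtain ⟨i, j, _, _, _, _, rfl⟩ := hτ; exact canSq_nonempty m i j
  have hkm : k ≤ m := canSqSide_mono_level hτ hσ hsub
  have hkm' : k + 1 ≤ m := by
    rcases eq_or_lt_of_le hkm with h | h
    · exfalso; subst h
      exact hne (Set.Subset.antisymm hsub (canSqSide_subset hσ hτ (le_refl _) (hsub hx) hx))
    · omega
  obtain ⟨q, hq, hxq⟩ := exists_quadrant_mem hσ (hsub hx)
  refine ⟨q, hq, ?_⟩
  obtain ⟨k₀, hσ₀, hq₀, -⟩ := hq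
  have : k₀ = k := level_unique hσ₀ hσ
  subst this
  exact canSqSide_subset hτ hq₀ hkm' hx hxq

lemma floor_double (y : ℝ) : ⌊2*y⌋ = 2*⌊y⌋ ∨ ⌊2*y⌋ = 2*⌊y⌋+1 := by
  have h1 := Int.floor_le y
  have h2 := Int.lt_floor_add_one y
  have hl : 2*⌊y⌋ ≤ ⌊2*y⌋ := Int.le_floor.2 (by push_cast; linarith)
  have hu : ⌊2*y⌋ < 2*⌊y⌋ + 2 := Int.floor_lt.2 (by push_cast; linarith)
  omega

lemma quadrant_cases {k : ℕ} {i j : ℤ} {q : Set (ℝ × ℝ)}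
    (hq : IsQuadrantOf q (canSq k i j)) (hσ : IsCanSqSide k (canSq k i j)) :
    q = canSq (k+1) (2*i) (2*j) ∨ q = canSq (k+1) (2*i+1) (2*j) ∨
    q = canSq (k+1) (2*i) (2*j+1) ∨ q = canSq (k+1) (2*i+1) (2*j+1) := by
  obtain ⟨k₀, hσ₀, hq₀, hsub⟩ := hq
  have : k₀ = k := level_unique hσ₀ hσ
  subst this
  obtain ⟨i', j', _, _, _, _, rfl⟩ := hq₀
  obtain ⟨x, hx⟩ := canSq_nonempty (k₀+1) i' j'
  have hxσ := hsub hx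
  rw [mem_canSq] at hx hxσ
  have e1 : x.1 * (2:ℝ)^(k₀+1) = 2 * (x.1 * 2^k₀) := by rw [pow_succ]; ring
  have e2 : x.2 * (2:ℝ)^(k₀+1) = 2 * (x.2 * 2^k₀) := by rw [pow_succ]; ring
  have hi' : i' = 2*i ∨ i' = 2*i+1 := by
    rw [← hx.1, ← hxσ.1, e1]; exact floor_double _
  have hj' : j' = 2*j ∨ j' = 2*j+1 := by
    rw [← hx.2, ← hxσ.2, e2]; exact floor_double _
  rcases hi' with rfl | rfl <;> rcases hj' with rfl | rfl <;> tauto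

lemma isSmallest_unique {S σ τ : Set (ℝ × ℝ)} (h : IsSmallestCanSq S σ)
    (h' : IsSmallestCanSq S τ) : σ = τ :=
  Set.Subset.antisymm (h.2.2 τ h'.1 h'.2.1) (h'.2.2 σ h.1 h.2.1)

lemma smallestCanSq_spec {S : Set (ℝ × ℝ)} (h : ∃ σ, IsSmallestCanSq S σ) :
    IsSmallestCanSq S (smallestCanSq S) := by
  rw [smallestCanSq, dif_pos h]; exact h.choose_spec

lemma dIco_width {k : ℕ} {i : ℤ} {a b : ℝ} (ha : a ∈ dIco k i) (hb : b ∈ dIco k i) :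
    |a - b| < 1/2^k := by
  obtain ⟨ha1, ha2⟩ := ha
  obtain ⟨hb1, hb2⟩ := hb
  have hk := two_pow_pos' k
  rw [abs_sub_lt_iff]
  have key : ((i:ℝ)+1)/2^k = (i:ℝ)/2^k + 1/2^k := by ring
  constructor <;> linarith

lemma exists_isSmallestCanSq {S : Set (ℝ × ℝ)} (hSU : S ⊆ unitSq) {x y : ℝ × ℝ}
    (hx : x ∈ S) (hy : y ∈ S) (hxy : x ≠ y) : ∃ σ, IsSmallestCanSq S σ := by
  have hxU : x ∈ unitSq := hSU hx
  set K : Set ℕ := {k | S ⊆ sqAt k x} with hK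
  have h0 : 0 ∈ K := by
    have hx0 : x ∈ canSq 0 0 0 := by rw [← unitSq_eq]; exact hxU
    have : sqAt 0 x = unitSq := by rw [← canSq_eq_sqAt hx0, ← unitSq_eq]
    simp only [hK, Set.mem_setOf_eq, this]
    exact hSU
  -- d : positive coordinate gap
  have hd : ∃ d : ℝ, 0 < d ∧ ∀ k ∈ K, d < 1/2^k := by
    have : x.1 ≠ y.1 ∨ x.2 ≠ y.2 := by
      by_contra h
      push_neg at h
      exact hxy (Prod.ext h.1 h.2)
    rcases this with h | h
    · refine ⟨|x.1 - y.1|, abs_pos.2 (sub_ne_zero.2 h), fun k hk => ?_⟩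
      have hxk : x ∈ sqAt k x := mem_sqAt k x
      have hyk : y ∈ sqAt k x := hk hy
      exact dIco_width hxk.1 hyk.1
    · refine ⟨|x.2 - y.2|, abs_pos.2 (sub_ne_zero.2 h), fun k hk => ?_⟩
      have hxk : x ∈ sqAt k x := mem_sqAt k x
      have hyk : y ∈ sqAt k x := hk hy
      exact dIco_width hxk.2 hyk.2
  obtain ⟨d, hd0, hdk⟩ := hd
  have hbdd : BddAbove K := by
    obtain ⟨n, hn⟩ := exists_pow_lt_of_lt_one hd0 (by norm_num : (1:ℝ)/2 < 1)
    refine ⟨n, fun k hk => ?_⟩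
    by_contra hnk
    push_neg at hnk
    have h1 : ((1:ℝ)/2)^k ≤ (1/2)^n := by
      apply pow_le_pow_of_le_one (by norm_num) (by norm_num) (le_of_lt hnk)
    have h2 : ((1:ℝ)/2)^k = 1/2^k := by rw [div_pow]; norm_num
    have := hdk k hk
    rw [← h2] at this
    linarith
  have hKne : K.Nonempty := ⟨0, h0⟩
  have hmem : sSup K ∈ K := Nat.sSup_mem hKne hbdd
  set k' := sSup K
  refine ⟨sqAt k' x, ⟨k', isCanSqSide_sqAt hxU⟩, hmem, ?_⟩
  rintro τ ⟨m, hτ⟩ hSτ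
  obtain ⟨i, j, _, _, _, _, rfl⟩ := hτ
  have hxτ : x ∈ canSq m i j := hSτ hx
  have hτeq : canSq m i j = sqAt m x := canSq_eq_sqAt hxτ
  have hmK : m ∈ K := by rw [hK, Set.mem_setOf_eq, ← hτeq]; exact hSτ
  have hmk : m ≤ k' := le_csSup hbdd hmK
  rw [hτeq]
  exact canSq_subset_canSq hmk (mem_sqAt k' x) (mem_sqAt m x)

lemma exists_isSmallestCanSq_of_ncard {S : Set (ℝ × ℝ)} (hSU : S ⊆ unitSq)
    (hfin : S.Finite) (h2 : 2 ≤ S.ncard) : ∃ σ, IsSmallestCanSq S σ := by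
  obtain ⟨x, hx, y, hy, hxy⟩ := (Set.one_lt_ncard hfin).1 (by omega)
  exact exists_isSmallestCanSq hSU hx hy hxy

lemma smallestCanSq_insert_eq {S : Set (ℝ × ℝ)} {p : ℝ × ℝ}
    (h : ∃ σ, IsSmallestCanSq S σ) (hp : p ∈ smallestCanSq S) :
    smallestCanSq (S ∪ {p}) = smallestCanSq S := by
  have sp := smallestCanSq_spec h
  have h2 : IsSmallestCanSq (S ∪ {p}) (smallestCanSq S) :=
    ⟨sp.1, Set.union_subset sp.2.1 (Set.singleton_subset_iff.2 hp),
      fun τ hτ hsub => sp.2.2 τ hτ (subset_trans Set.subset_union_left hsub)⟩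
  exact isSmallest_unique (smallestCanSq_spec ⟨_, h2⟩) h2

lemma critical_mono {P Q σ : Set (ℝ × ℝ)} (h : Critical P σ) (hPQ : P ⊆ Q) :
    Critical Q σ := by
  obtain ⟨hc, q₁, q₂, h1, h2, hne, hn1, hn2⟩ := h
  exact ⟨hc, q₁, q₂, h1, h2, hne,
    hn1.mono (Set.inter_subset_inter_left _ hPQ),
    hn2.mono (Set.inter_subset_inter_left _ hPQ)⟩

lemma quadrant_disjoint {q q' σ : Set (ℝ × ℝ)} (h : IsQuadrantOf q σ)
    (h' : IsQuadrantOf q' σ) (hne : q ≠ q') : Disjoint q q' := by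
  rw [Set.disjoint_left]
  intro x hx hx'
  exact hne (quadrant_eq_of_mem h h' hx hx')

lemma critical_two_points {P σ : Set (ℝ × ℝ)} (h : Critical P σ) (hfin : P.Finite) :
    2 ≤ (P ∩ σ).ncard := by
  obtain ⟨hc, q₁, q₂, h1, h2, hne, ⟨x, hx⟩, ⟨y, hy⟩⟩ := h
  have hxy : x ≠ y := by
    rintro rfl
    exact (quadrant_disjoint h1 h2 hne).ne_of_mem hx.2 hy.2 rfl
  have hxm : x ∈ P ∩ σ := ⟨hx.1, h1.subset hx.2⟩
  have hym : y ∈ P ∩ σ := ⟨hy.1, h2.subset hy.2⟩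
  exact (Set.one_lt_ncard (hfin.inter_of_left σ)).2 ⟨x, hxm, y, hym, hxy⟩

lemma critical_eq_of_inter_subset {P σ ρ : Set (ℝ × ℝ)} (h : Critical P σ)
    (hρ : IsCanSq ρ) (hsub : ρ ⊆ σ) (hPσ : P ∩ σ ⊆ ρ) : ρ = σ := by
  by_contra hne
  obtain ⟨hcs, q₁, q₂, h1, h2, hq12, ⟨x, hx⟩, ⟨y, hy⟩⟩ := h
  obtain ⟨k, hσk⟩ := hcs
  obtain ⟨m, hρm⟩ := hρ
  obtain ⟨qd, hqd, hρqd⟩ := subset_quadrant_of_ssubset hσk hρm hsub hne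
  have hx' : x ∈ qd := hρqd (hPσ ⟨hx.1, h1.subset hx.2⟩)
  have hy' : y ∈ qd := hρqd (hPσ ⟨hy.1, h2.subset hy.2⟩)
  have e1 : q₁ = qd := quadrant_eq_of_mem h1 hqd hx.2 hx'
  have e2 : q₂ = qd := quadrant_eq_of_mem h2 hqd hy.2 hy'
  exact hq12 (e1.trans e2.symm)

lemma critical_subset_smallest {P σ s : Set (ℝ × ℝ)} (h : Critical P σ)
    (hs : IsSmallestCanSq P s) : σ ⊆ s := by
  have h' := h
  obtain ⟨hcs, q₁, q₂, h1, h2, hq12, ⟨x, hx⟩, -⟩ := h'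
  have hxσ : x ∈ σ := h1.subset hx.2
  have hxs : x ∈ s := hs.2.1 hx.1
  rcases canSq_comparable hcs hs.1 hxσ hxs with hst | hts
  · exact hst
  · have : s = σ := critical_eq_of_inter_subset h hs.1 hts
      (fun z hz => hs.2.1 hz.1)
    rw [this]

/-- The unique tile shape at a quadrant `q` determined by the point set. -/
noncomputable def tileAt (Q q : Set (ℝ × ℝ)) : Set (ℝ × ℝ) :=
  if (Q ∩ q).ncard ≤ 1 then q else q \ smallestCanSq (Q ∩ q)

lemma tile_eq_tileAt {Q q t : Set (ℝ × ℝ)}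
    (h : ((Q ∩ q).ncard ≤ 1 ∧ t = q)
      ∨ (2 ≤ (Q ∩ q).ncard ∧ smallestCanSq (Q ∩ q) ≠ q ∧ t = q \ smallestCanSq (Q ∩ q))) :
    t = tileAt Q q := by
  rcases h with ⟨h1, rfl⟩ | ⟨h1, h2, rfl⟩
  · rw [tileAt, if_pos h1]
  · rw [tileAt, if_neg (by omega)]

lemma nested_changed_false {P : Set (ℝ × ℝ)} (hfin : P.Finite) (hPU : P ⊆ unitSq)
    {p : ℝ × ℝ} {σ₁ q₁ σ₂ q₂ : Set (ℝ × ℝ)}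
    (crit₁ : Critical P σ₁) (hq₁ : IsQuadrantOf q₁ σ₁) (hp₁ : p ∈ q₁)
    (crit₂ : Critical P σ₂) (hq₂ : IsQuadrantOf q₂ σ₂) (hp₂ : p ∈ q₂)
    (hsub : q₁ ⊆ q₂) (hne : q₁ ≠ q₂)
    (hcond : (P ∩ q₂).ncard ≤ 1 ∨ p ∉ smallestCanSq (P ∩ q₂)) : False := by
  obtain ⟨k₁, hσ₁s, hq₁s, hq₁sub⟩ := hq₁
  obtain ⟨k₂, hσ₂s, hq₂s, hq₂sub⟩ := hq₂
  have hlev : k₂ + 1 ≤ k₁ + 1 := canSqSide_mono_level hq₁s hq₂s hsub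
  have hlt : k₂ + 1 < k₁ + 1 := by
    rcases eq_or_lt_of_le hlev with h | h
    · exact absurd (Set.Subset.antisymm hsub
        (canSqSide_subset hq₂s hq₁s (by omega) hp₂ hp₁)) hne
    · exact h
  have hσ₁q₂ : σ₁ ⊆ q₂ := canSqSide_subset hσ₁s hq₂s (by omega) (hq₁sub hp₁) hp₂
  have h2 : 2 ≤ (P ∩ σ₁).ncard := critical_two_points crit₁ hfin
  have hsubP : P ∩ σ₁ ⊆ P ∩ q₂ := Set.inter_subset_inter_right _ hσ₁q₂
  have h2' : 2 ≤ (P ∩ q₂).ncard :=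
    le_trans h2 (Set.ncard_le_ncard hsubP (hfin.inter_of_left _))
  have hex : ∃ s, IsSmallestCanSq (P ∩ q₂) s :=
    exists_isSmallestCanSq_of_ncard (subset_trans Set.inter_subset_left hPU)
      (hfin.inter_of_left _) h2'
  have hs := smallestCanSq_spec hex
  have hps : p ∉ smallestCanSq (P ∩ q₂) := by
    rcases hcond with h | h
    · omega
    · exact h
  obtain ⟨x, hx⟩ : (P ∩ σ₁).Nonempty :=
    Set.nonempty_of_ncard_ne_zero (by omega)
  have hxs : x ∈ smallestCanSq (P ∩ q₂) := hs.2.1 (hsubP hx)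
  rcases canSq_comparable crit₁.1 hs.1 hx.2 hxs with h | h
  · exact hps (h (hq₁sub hp₁))
  · have he : smallestCanSq (P ∩ q₂) = σ₁ :=
      critical_eq_of_inter_subset crit₁ hs.1 h (fun z hz => hs.2.1 (hsubP hz))
    exact hps (by rw [he]; exact hq₁sub hp₁)

section Main

variable {P : Set (ℝ × ℝ)} {p : ℝ × ℝ}

lemma removed_mem_p (hfin : P.Finite) (hPU : P ⊆ unitSq) (hpU : p ∈ unitSq) (hpP : p ∉ P)
    {t : Set (ℝ × ℝ)} (ht : t ∈ QT P) (hnt : t ∉ QT (P ∪ {p})) : p ∈ t := by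
  have hQfin : (P ∪ {p}).Finite := hfin.union (Set.finite_singleton p)
  rcases ht with ⟨h1, rfl⟩ | ⟨h2, hne, rfl⟩ | ⟨σ, q, hcrit, hq, hcase⟩
  · exact hpU
  · by_contra hpt
    have hps : p ∈ smallestCanSq P := by
      by_contra hps
      exact hpt ⟨hpU, hps⟩
    have hex : ∃ s, IsSmallestCanSq P s := exists_isSmallestCanSq_of_ncard hPU hfin h2
    have heq : smallestCanSq (P ∪ {p}) = smallestCanSq P := smallestCanSq_insert_eq hex hps
    apply hnt
    refine Or.inr (Or.inl ⟨?_, by rw [heq]; exact hne, by rw [heq]⟩)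
    calc 2 ≤ P.ncard := h2
      _ ≤ (P ∪ {p}).ncard := Set.ncard_le_ncard Set.subset_union_left hQfin
  · have hcritQ : Critical (P ∪ {p}) σ := critical_mono hcrit Set.subset_union_left
    by_contra hpt
    apply hnt
    by_cases hpq : p ∈ q
    · -- p ∈ q but p ∉ t
      rcases hcase with ⟨hle, rfl⟩ | ⟨h2, hne, rfl⟩
      · exact absurd hpq hpt
      · -- t = q \ sq(P∩q), p ∈ q, p ∉ t so p ∈ sq(P∩q)
        have hps : p ∈ smallestCanSq (P ∩ q) := by
          by_contra hps
          exact hpt ⟨hpq, hps⟩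
        have hex : ∃ s, IsSmallestCanSq (P ∩ q) s :=
          exists_isSmallestCanSq_of_ncard (subset_trans Set.inter_subset_left hPU)
            (hfin.inter_of_left _) h2
        have hQq : (P ∪ {p}) ∩ q = (P ∩ q) ∪ {p} := by
          rw [Set.union_inter_distrib_right]
          congr 1
          exact Set.inter_eq_self_of_subset_left (Set.singleton_subset_iff.2 hpq)
        have heq : smallestCanSq ((P ∪ {p}) ∩ q) = smallestCanSq (P ∩ q) := by
          rw [hQq]; exact smallestCanSq_insert_eq hex hps
        refine Or.inr (Or.inr ⟨σ, q, hcritQ, hq, Or.inr ⟨?_, by rw [heq]; exact hne, by rw [heq]⟩⟩)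
        calc 2 ≤ (P ∩ q).ncard := h2
          _ ≤ ((P ∪ {p}) ∩ q).ncard := Set.ncard_le_ncard
              (Set.inter_subset_inter_left _ Set.subset_union_left) (hQfin.inter_of_left _)
    · -- p ∉ q : same tile
      have hQq : (P ∪ {p}) ∩ q = P ∩ q := by
        rw [Set.union_inter_distrib_right]
        have : {p} ∩ q = ∅ := by
          rw [Set.singleton_inter_eq_empty]; exact hpq
        rw [this, Set.union_empty]
      refine Or.inr (Or.inr ⟨σ, q, hcritQ, hq, ?_⟩)
      rw [hQq]
      exact hcase

lemma removed_subsingleton (hfin : P.Finite) (hPU : P ⊆ unitSq) (hpU : p ∈ unitSq)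
    (hpP : p ∉ P) : (QT P \ QT (P ∪ {p})).Subsingleton := by
  intro t₁ ht₁ t₂ ht₂
  have hp₁ : p ∈ t₁ := removed_mem_p hfin hPU hpU hpP ht₁.1 ht₁.2
  have hp₂ : p ∈ t₂ := removed_mem_p hfin hPU hpU hpP ht₂.1 ht₂.2
  -- helper : a (iii)-tile forces 2 ≤ P.ncard
  have hcard3 : ∀ σ q : Set (ℝ × ℝ), Critical P σ → 2 ≤ P.ncard := by
    intro σ q hc
    calc 2 ≤ (P ∩ σ).ncard := critical_two_points hc hfin
      _ ≤ P.ncard := Set.ncard_le_ncard Set.inter_subset_left hfin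
  -- cross case (ii)/(iii) helper
  have cross : ∀ t t' : Set (ℝ × ℝ), p ∈ t → p ∈ t' →
      (2 ≤ P.ncard ∧ smallestCanSq P ≠ unitSq ∧ t = unitSq \ smallestCanSq P) →
      (∃ σ q : Set (ℝ × ℝ), Critical P σ ∧ IsQuadrantOf q σ ∧
        (((P ∩ q).ncard ≤ 1 ∧ t' = q)
          ∨ (2 ≤ (P ∩ q).ncard ∧ smallestCanSq (P ∩ q) ≠ q ∧ t' = q \ smallestCanSq (P ∩ q)))) →
      False := by
    rintro t t' hpt hpt' ⟨h2, -, rfl⟩ ⟨σ, q, hc, hq, hcase⟩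
    have hex : ∃ s, IsSmallestCanSq P s := exists_isSmallestCanSq_of_ncard hPU hfin h2
    have hσs : σ ⊆ smallestCanSq P := critical_subset_smallest hc (smallestCanSq_spec hex)
    have hpq : p ∈ q := by
      rcases hcase with ⟨-, rfl⟩ | ⟨-, -, rfl⟩
      · exact hpt'
      · exact hpt'.1
    exact hpt.2 (hσs (hq.subset hpq))
  -- (iii)/(iii) helper : tiles through p at quadrants coincide
  have qcase : ∀ t t' : Set (ℝ × ℝ), p ∈ t → p ∈ t' →
      (∃ σ q : Set (ℝ × ℝ), Critical P σ ∧ IsQuadrantOf q σ ∧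
        (((P ∩ q).ncard ≤ 1 ∧ t = q)
          ∨ (2 ≤ (P ∩ q).ncard ∧ smallestCanSq (P ∩ q) ≠ q ∧ t = q \ smallestCanSq (P ∩ q)))) →
      (∃ σ q : Set (ℝ × ℝ), Critical P σ ∧ IsQuadrantOf q σ ∧
        (((P ∩ q).ncard ≤ 1 ∧ t' = q)
          ∨ (2 ≤ (P ∩ q).ncard ∧ smallestCanSq (P ∩ q) ≠ q ∧ t' = q \ smallestCanSq (P ∩ q)))) →
      t = t' := by
    rintro t t' hpt hpt' ⟨σ, q, hc, hq, hcase⟩ ⟨σ', q', hc', hq', hcase'⟩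
    have hpq : p ∈ q := by
      rcases hcase with ⟨-, rfl⟩ | ⟨-, -, rfl⟩
      · exact hpt
      · exact hpt.1
    have hpq' : p ∈ q' := by
      rcases hcase' with ⟨-, rfl⟩ | ⟨-, -, rfl⟩
      · exact hpt'
      · exact hpt'.1
    have hcond : ∀ (u : Set (ℝ × ℝ)) (s : Set (ℝ × ℝ)), p ∈ s →
        (((P ∩ u).ncard ≤ 1 ∧ s = u)
          ∨ (2 ≤ (P ∩ u).ncard ∧ smallestCanSq (P ∩ u) ≠ u ∧ s = u \ smallestCanSq (P ∩ u))) →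
        (P ∩ u).ncard ≤ 1 ∨ p ∉ smallestCanSq (P ∩ u) := by
      rintro u s hps (⟨h1, rfl⟩ | ⟨h1, h2, rfl⟩)
      · exact Or.inl h1
      · exact Or.inr hps.2
    by_cases hqq : q = q'
    · subst hqq
      have e1 : t = tileAt P q := tile_eq_tileAt (by tauto)
      have e2 : t' = tileAt P q := tile_eq_tileAt (by tauto)
      rw [e1, e2]
    · rcases canSq_comparable hq.isCanSq hq'.isCanSq hpq hpq' with h | h
      · exact (nested_changed_false hfin hPU hc hq hpq hc' hq' hpq' h hqq
          (hcond q' t' hpt' hcase')).elim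
      · exact (nested_changed_false hfin hPU hc' hq' hpq' hc hq hpq h
          (Ne.symm hqq) (hcond q t hpt hcase)).elim
  rcases ht₁.1 with ⟨h1, rfl⟩ | h₁ | h₁
  · -- t₁ = U, P.ncard ≤ 1
    rcases ht₂.1 with ⟨-, rfl⟩ | ⟨h2, -, -⟩ | ⟨σ, q, hc, -, -⟩
    · rfl
    · omega
    · exact absurd (hcard3 σ q hc) (by omega)
  · rcases ht₂.1 with ⟨h1, rfl⟩ | h₂ | h₂
    · exact absurd h₁.1 (by omega)
    · rw [h₁.2.2, h₂.2.2]
    · exact (cross t₁ t₂ hp₁ hp₂ h₁ h₂).elim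
  · rcases ht₂.1 with ⟨h1, rfl⟩ | h₂ | h₂
    · obtain ⟨σ, q, hc, -, -⟩ := h₁
      exact absurd (hcard3 σ q hc) (by omega)
    · exact (cross t₂ t₁ hp₂ hp₁ h₂ h₁).elim
    · exact qcase t₁ t₂ hp₁ hp₂ h₁ h₂

end Main

section Main2

variable {P : Set (ℝ × ℝ)} {p : ℝ × ℝ}

lemma newCritical_props (hpP : p ∉ P) {σ : Set (ℝ × ℝ)}
    (hQ : Critical (P ∪ {p}) σ) (hP : ¬Critical P σ) :
    (P ∩ σ).Nonempty ∧ p ∈ σ ∧ ∀ q, IsQuadrantOf q σ → p ∈ q → P ∩ q = ∅ := by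
  obtain ⟨hcs, q₁, q₂, hq₁, hq₂, hne, hn₁, hn₂⟩ := hQ
  have key : ∀ q, IsQuadrantOf q σ → ((P ∪ {p}) ∩ q).Nonempty → p ∉ q → (P ∩ q).Nonempty := by
    rintro q hq ⟨z, hz1, hz2⟩ hpq
    rcases hz1 with hz | hz
    · exact ⟨z, hz, hz2⟩
    · rw [Set.mem_singleton_iff] at hz
      exact absurd (hz ▸ hz2) hpq
  have hnc : ∀ a b : Set (ℝ × ℝ), IsQuadrantOf a σ → IsQuadrantOf b σ → a ≠ b →
      (P ∩ a).Nonempty → (P ∩ b).Nonempty → False := by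
    intro a b ha hb hab h1 h2
    exact hP ⟨hcs, a, b, ha, hb, hab, h1, h2⟩
  have main : ∀ a b : Set (ℝ × ℝ), IsQuadrantOf a σ → IsQuadrantOf b σ → a ≠ b →
      ((P ∪ {p}) ∩ b).Nonempty → p ∈ a →
      (P ∩ σ).Nonempty ∧ p ∈ σ ∧ ∀ q, IsQuadrantOf q σ → p ∈ q → P ∩ q = ∅ := by
    intro a b ha hb hab hnb hpa
    have hpb : p ∉ b := fun h => hab (quadrant_eq_of_mem ha hb hpa h)
    have hPb : (P ∩ b).Nonempty := key b hb hnb hpb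
    refine ⟨hPb.mono (Set.inter_subset_inter_right P hb.subset), ha.subset hpa, ?_⟩
    intro q hq hpq
    by_contra hPq
    rw [← Ne, ← Set.nonempty_iff_ne_empty] at hPq
    have hqb : q ≠ b := fun h => hpb (h ▸ hpq)
    exact hnc q b hq hb hqb hPq hPb
  by_cases hp₁ : p ∈ q₁
  · exact main q₁ q₂ hq₁ hq₂ hne hn₂ hp₁
  · by_cases hp₂ : p ∈ q₂
    · exact main q₂ q₁ hq₂ hq₁ (Ne.symm hne) hn₁ hp₂
    · exact absurd (hnc q₁ q₂ hq₁ hq₂ hne (key q₁ hq₁ hn₁ hp₁) (key q₂ hq₂ hn₂ hp₂)) id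

lemma newCritical_unique (hpP : p ∉ P) {σ σ' : Set (ℝ × ℝ)}
    (hQ : Critical (P ∪ {p}) σ) (hP : ¬Critical P σ)
    (hQ' : Critical (P ∪ {p}) σ') (hP' : ¬Critical P σ') : σ = σ' := by
  obtain ⟨hne1, hpσ, hquad⟩ := newCritical_props hpP hQ hP
  obtain ⟨hne1', hpσ', hquad'⟩ := newCritical_props hpP hQ' hP'
  have helper : ∀ τ τ' : Set (ℝ × ℝ), Critical (P ∪ {p}) τ → Critical (P ∪ {p}) τ' →
      (∀ q, IsQuadrantOf q τ → p ∈ q → P ∩ q = ∅) → (P ∩ τ').Nonempty → p ∈ τ' →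
      τ' ⊆ τ → τ' ≠ τ → False := by
    intro τ τ' hcτ0 hcτ' hq hne' hp' hsub hneq
    obtain ⟨k, hσk⟩ := hcτ0.1
    obtain ⟨m, hσ'm⟩ := hcτ'.1
    obtain ⟨qd, hqd, hsub'⟩ := subset_quadrant_of_ssubset hσk hσ'm hsub hneq
    have : P ∩ qd = ∅ := hq qd hqd (hsub' hp')
    obtain ⟨x, hx⟩ := hne'
    have : x ∈ P ∩ qd := ⟨hx.1, hsub' hx.2⟩
    rw [‹P ∩ qd = ∅›] at this
    exact this
  by_cases heq : σ = σ'
  · exact heq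
  · rcases canSq_comparable hQ.1 hQ'.1 hpσ hpσ' with h | h
    · exact absurd (helper σ' σ hQ' hQ hquad' hne1 hpσ h heq) id
    · exact absurd (helper σ σ' hQ hQ' hquad hne1' hpσ' h (Ne.symm heq)) id

lemma new_cases (hfin : P.Finite) (hPU : P ⊆ unitSq) (hpU : p ∈ unitSq) (hpP : p ∉ P)
    {t : Set (ℝ × ℝ)} (htQ : t ∈ QT (P ∪ {p})) (htP : t ∉ QT P) :
    (2 ≤ (P ∪ {p}).ncard ∧ smallestCanSq (P ∪ {p}) ≠ unitSq ∧
        t = unitSq \ smallestCanSq (P ∪ {p}))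
    ∨ (∃ σ q : Set (ℝ × ℝ), Critical (P ∪ {p}) σ ∧ ¬Critical P σ ∧ IsQuadrantOf q σ ∧
        t = tileAt (P ∪ {p}) q)
    ∨ (∃ σ q : Set (ℝ × ℝ), Critical P σ ∧ IsQuadrantOf q σ ∧ p ∈ q ∧
        ((P ∩ q).ncard = 1 ∨ (2 ≤ (P ∩ q).ncard ∧ p ∉ smallestCanSq (P ∩ q))) ∧
        t = tileAt (P ∪ {p}) q) := by
  have hQfin : (P ∪ {p}).Finite := hfin.union (Set.finite_singleton p)
  rcases htQ with ⟨h1, rfl⟩ | h | ⟨σ, q, hcQ, hq, hcase⟩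
  · exact absurd (Or.inl ⟨le_trans (Set.ncard_le_ncard Set.subset_union_left hQfin) h1,
      rfl⟩) htP
  · exact Or.inl h
  · have ht : t = tileAt (P ∪ {p}) q := tile_eq_tileAt hcase
    by_cases hcP : Critical P σ
    · by_cases hpq : p ∈ q
      · have hpPq : p ∉ P ∩ q := fun h => hpP h.1
        have hQq : (P ∪ {p}) ∩ q = (P ∩ q) ∪ {p} := by
          rw [Set.union_inter_distrib_right]
          congr 1
          exact Set.inter_eq_self_of_subset_left (Set.singleton_subset_iff.2 hpq)
        have hncard : ((P ∪ {p}) ∩ q).ncard = (P ∩ q).ncard + 1 := by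
          rw [hQq, Set.union_singleton, Set.ncard_insert_of_notMem hpPq (hfin.inter_of_left _)]
        rcases Nat.lt_or_ge (P ∩ q).ncard 2 with hn | hn
        · have h01 : (P ∩ q).ncard = 0 ∨ (P ∩ q).ncard = 1 := by omega
          rcases h01 with h | h
          · have hPq0 : (P ∩ q).ncard ≤ 1 := by omega
            rcases hcase with ⟨-, rfl⟩ | ⟨h2, -, -⟩
            · exact absurd (Or.inr (Or.inr ⟨σ, _, hcP, hq, Or.inl ⟨hPq0, rfl⟩⟩)) htP
            · omega
          · exact Or.inr (Or.inr ⟨σ, q, hcP, hq, hpq, Or.inl h, ht⟩)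
        · by_cases hps : p ∈ smallestCanSq (P ∩ q)
          · exfalso
            have hex : ∃ s, IsSmallestCanSq (P ∩ q) s :=
              exists_isSmallestCanSq_of_ncard (subset_trans Set.inter_subset_left hPU)
                (hfin.inter_of_left _) hn
            have heq : smallestCanSq ((P ∪ {p}) ∩ q) = smallestCanSq (P ∩ q) := by
              rw [hQq]; exact smallestCanSq_insert_eq hex hps
            rcases hcase with ⟨h1, -⟩ | ⟨-, hne', rfl⟩
            · omega
            · rw [heq] at hne'
              exact htP (Or.inr (Or.inr ⟨σ, q, hcP, hq, Or.inr ⟨hn, hne', by rw [heq]⟩⟩))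
          · exact Or.inr (Or.inr ⟨σ, q, hcP, hq, hpq, Or.inr ⟨hn, hps⟩, ht⟩)
      · exfalso
        have hQq : (P ∪ {p}) ∩ q = P ∩ q := by
          rw [Set.union_inter_distrib_right]
          have : {p} ∩ q = ∅ := by rw [Set.singleton_inter_eq_empty]; exact hpq
          rw [this, Set.union_empty]
        rw [hQq] at hcase
        exact htP (Or.inr (Or.inr ⟨σ, q, hcP, hq, hcase⟩))
    · exact Or.inr (Or.inl ⟨σ, q, hcQ, hcP, hq, ht⟩)

lemma root_not_new (hfin : P.Finite) (hPU : P ⊆ unitSq) {σ₀ q₀ : Set (ℝ × ℝ)}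
    (hc : Critical P σ₀) (hq : IsQuadrantOf q₀ σ₀) (hpq : p ∈ q₀)
    (hne : smallestCanSq (P ∪ {p}) ≠ unitSq) :
    unitSq \ smallestCanSq (P ∪ {p}) ∈ QT P := by
  have h2P : 2 ≤ P.ncard :=
    le_trans (critical_two_points hc hfin) (Set.ncard_le_ncard Set.inter_subset_left hfin)
  have hex := exists_isSmallestCanSq_of_ncard hPU hfin h2P
  have hσs : σ₀ ⊆ smallestCanSq P := critical_subset_smallest hc (smallestCanSq_spec hex)
  have hps : p ∈ smallestCanSq P := hσs (hq.subset hpq)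
  have heq := smallestCanSq_insert_eq hex hps
  rw [heq] at hne ⊢
  exact Or.inr (Or.inl ⟨h2P, hne, rfl⟩)

lemma changed_unique (hfin : P.Finite) (hPU : P ⊆ unitSq) {σ q σ' q' : Set (ℝ × ℝ)}
    (hc : Critical P σ) (hq : IsQuadrantOf q σ) (hpq : p ∈ q)
    (hcond : (P ∩ q).ncard = 1 ∨ (2 ≤ (P ∩ q).ncard ∧ p ∉ smallestCanSq (P ∩ q)))
    (hc' : Critical P σ') (hq' : IsQuadrantOf q' σ') (hpq' : p ∈ q')
    (hcond' : (P ∩ q').ncard = 1 ∨ (2 ≤ (P ∩ q').ncard ∧ p ∉ smallestCanSq (P ∩ q'))) :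
    q = q' := by
  by_contra hne
  have tr : ∀ u : Set (ℝ × ℝ),
      (P ∩ u).ncard = 1 ∨ (2 ≤ (P ∩ u).ncard ∧ p ∉ smallestCanSq (P ∩ u)) →
      (P ∩ u).ncard ≤ 1 ∨ p ∉ smallestCanSq (P ∩ u) := by
    rintro u (h | ⟨-, h⟩)
    · exact Or.inl (by omega)
    · exact Or.inr h
  rcases canSq_comparable hq.isCanSq hq'.isCanSq hpq hpq' with h | h
  · exact nested_changed_false hfin hPU hc hq hpq hc' hq' hpq' h hne (tr q' hcond')
  · exact nested_changed_false hfin hPU hc' hq' hpq' hc hq hpq h (Ne.symm hne) (tr q hcond)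

end Main2

/-- Inserting a point creates only a constant number of new tiles: at most `5`
tiles of `QT(P ∪ {p})` are not tiles of `QT(P)`, and at most `1` tile of `QT(P)`
is not a tile of `QT(P ∪ {p})`. -/
theorem QT_insert_few_changes (P : Set (ℝ × ℝ)) (hfin : P.Finite)
    (hPU : P ⊆ unitSq) (p : ℝ × ℝ) (hp : p ∈ unitSq \ P) :
    (QT (P ∪ {p}) \ QT P).ncard ≤ 5 ∧ (QT P \ QT (P ∪ {p})).ncard ≤ 1 := by
  obtain ⟨hpU, hpP⟩ := hp
  constructor
  · -- at most 5 new tiles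
    have bound : ∀ a b c d e : Set (ℝ × ℝ),
        QT (P ∪ {p}) \ QT P ⊆ {a, b, c, d, e} → (QT (P ∪ {p}) \ QT P).ncard ≤ 5 := by
      intro a b c d e hsub
      have h5 : ({a, b, c, d, e} : Set (Set (ℝ × ℝ))).ncard ≤ 5 := by
        have h1 := Set.ncard_insert_le a ({b, c, d, e} : Set (Set (ℝ × ℝ)))
        have h2 := Set.ncard_insert_le b ({c, d, e} : Set (Set (ℝ × ℝ)))
        have h3 := Set.ncard_insert_le c ({d, e} : Set (Set (ℝ × ℝ)))
        have h4 := Set.ncard_insert_le d ({e} : Set (Set (ℝ × ℝ)))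
        have h0 : ({e} : Set (Set (ℝ × ℝ))).ncard = 1 := Set.ncard_singleton e
        omega
      exact le_trans (Set.ncard_le_ncard hsub (Set.toFinite _)) h5
    by_cases hch : ∃ σ q : Set (ℝ × ℝ), Critical P σ ∧ IsQuadrantOf q σ ∧ p ∈ q ∧
        ((P ∩ q).ncard = 1 ∨ (2 ≤ (P ∩ q).ncard ∧ p ∉ smallestCanSq (P ∩ q)))
    · obtain ⟨σ₀, q₀, hc₀, hq₀, hpq₀, hcond₀⟩ := hch
      by_cases hnew : ∃ σ, Critical (P ∪ {p}) σ ∧ ¬Critical P σ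
      · obtain ⟨σs, hQσ, hPσ⟩ := hnew
        obtain ⟨k, hside⟩ := hQσ.1
        have hside' := hside
        obtain ⟨i, j, hi0, hi1, hj0, hj1, hσeq⟩ := hside'
        apply bound (tileAt (P ∪ {p}) q₀)
          (tileAt (P ∪ {p}) (canSq (k+1) (2*i) (2*j)))
          (tileAt (P ∪ {p}) (canSq (k+1) (2*i+1) (2*j)))
          (tileAt (P ∪ {p}) (canSq (k+1) (2*i) (2*j+1)))
          (tileAt (P ∪ {p}) (canSq (k+1) (2*i+1) (2*j+1)))
        rintro t ⟨htQ, htP⟩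
        rcases new_cases hfin hPU hpU hpP htQ htP with
          ⟨h2, hne, rfl⟩ | ⟨σ, q, h1, h2, h3, rfl⟩ | ⟨σ, q, h1, h2, h3, h4, rfl⟩
        · exact absurd (root_not_new hfin hPU hc₀ hq₀ hpq₀ hne) htP
        · have hσσ : σ = σs := newCritical_unique hpP h1 h2 hQσ hPσ
          subst hσσ
          rw [hσeq] at h3
          have hsk : IsCanSqSide k (canSq k i j) := ⟨i, j, hi0, hi1, hj0, hj1, rfl⟩
          rcases quadrant_cases h3 hsk with h | h | h | h <;>
            · rw [h]; simp [Set.mem_insert_iff]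
        · have heq : q = q₀ := changed_unique hfin hPU h1 h2 h3 h4 hc₀ hq₀ hpq₀ hcond₀
          rw [heq]
          simp [Set.mem_insert_iff]
      · apply bound (tileAt (P ∪ {p}) q₀) (tileAt (P ∪ {p}) q₀) (tileAt (P ∪ {p}) q₀)
          (tileAt (P ∪ {p}) q₀) (tileAt (P ∪ {p}) q₀)
        rintro t ⟨htQ, htP⟩
        rcases new_cases hfin hPU hpU hpP htQ htP with
          ⟨h2, hne, rfl⟩ | ⟨σ, q, h1, h2, h3, rfl⟩ | ⟨σ, q, h1, h2, h3, h4, rfl⟩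
        · exact absurd (root_not_new hfin hPU hc₀ hq₀ hpq₀ hne) htP
        · exact absurd ⟨σ, h1, h2⟩ hnew
        · have heq : q = q₀ := changed_unique hfin hPU h1 h2 h3 h4 hc₀ hq₀ hpq₀ hcond₀
          rw [heq]
          simp [Set.mem_insert_iff]
    · by_cases hnew : ∃ σ, Critical (P ∪ {p}) σ ∧ ¬Critical P σ
      · obtain ⟨σs, hQσ, hPσ⟩ := hnew
        obtain ⟨k, hside⟩ := hQσ.1
        have hside' := hside
        obtain ⟨i, j, hi0, hi1, hj0, hj1, hσeq⟩ := hside'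
        apply bound (unitSq \ smallestCanSq (P ∪ {p}))
          (tileAt (P ∪ {p}) (canSq (k+1) (2*i) (2*j)))
          (tileAt (P ∪ {p}) (canSq (k+1) (2*i+1) (2*j)))
          (tileAt (P ∪ {p}) (canSq (k+1) (2*i) (2*j+1)))
          (tileAt (P ∪ {p}) (canSq (k+1) (2*i+1) (2*j+1)))
        rintro t ⟨htQ, htP⟩
        rcases new_cases hfin hPU hpU hpP htQ htP with
          ⟨h2, hne, rfl⟩ | ⟨σ, q, h1, h2, h3, rfl⟩ | ⟨σ, q, h1, h2, h3, h4, rfl⟩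
        · simp [Set.mem_insert_iff]
        · have hσσ : σ = σs := newCritical_unique hpP h1 h2 hQσ hPσ
          subst hσσ
          rw [hσeq] at h3
          have hsk : IsCanSqSide k (canSq k i j) := ⟨i, j, hi0, hi1, hj0, hj1, rfl⟩
          rcases quadrant_cases h3 hsk with h | h | h | h <;>
            · rw [h]; simp [Set.mem_insert_iff]
        · exact absurd ⟨σ, q, h1, h2, h3, h4⟩ hch
      · apply bound (unitSq \ smallestCanSq (P ∪ {p})) (unitSq \ smallestCanSq (P ∪ {p}))
          (unitSq \ smallestCanSq (P ∪ {p})) (unitSq \ smallestCanSq (P ∪ {p}))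
          (unitSq \ smallestCanSq (P ∪ {p}))
        rintro t ⟨htQ, htP⟩
        rcases new_cases hfin hPU hpU hpP htQ htP with
          ⟨h2, hne, rfl⟩ | ⟨σ, q, h1, h2, h3, rfl⟩ | ⟨σ, q, h1, h2, h3, h4, rfl⟩
        · simp [Set.mem_insert_iff]
        · exact absurd ⟨σ, h1, h2⟩ hnew
        · exact absurd ⟨σ, q, h1, h2, h3, h4⟩ hch
  · -- at most 1 removed tile
    have hsub := removed_subsingleton hfin hPU hpU hpP
    rcases hsub.eq_empty_or_singleton with h | ⟨a, h⟩
    · rw [h, Set.ncard_empty]; omega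
    · rw [h, Set.ncard_singleton]
end

section
/- (Lemma: probability that a tile is created in the i-th iteration.) Let P ⊆ U be a finite set of n distinct points, let π : {1, …, n} → P be a uniformly random bijection, and for 0 ≤ j ≤ n set P_j = {π(1), …, π(j)}. Then for every subset f ⊆ U and every 1 ≤ i ≤ n, Pr[f is a tile of QT(P_i) and f is not a tile of QT(P_{i−1})] ≤ (4 / i) · Pr[f is a tile of QT(P_i)]. -/
open scoped Classical

/-- `P_j = {π(1), …, π(j)}`: the set of the first `j` points of `P` in the
random order `π : {1, …, n} → P` (modelled as `π : Fin n ≃ P`, with index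
`t : Fin n` corresponding to position `t + 1`). -/
def prefixSet (n : ℕ) (P : Finset (ℝ × ℝ)) (π : Fin n ≃ {x // x ∈ P}) (j : ℕ) :
    Set (ℝ × ℝ) :=
  {x : ℝ × ℝ | ∃ t : Fin n, (t : ℕ) < j ∧ ((π t : {x // x ∈ P}) : ℝ × ℝ) = x}

section Geometry

/-- 1-D dyadic laminarity. -/
lemma ico_dyadic {k l : ℕ} (hkl : k ≤ l) {i m : ℤ} {x : ℝ}
    (hx1 : (i : ℝ) / 2 ^ k ≤ x) (hx2 : x < ((i : ℝ) + 1) / 2 ^ k)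
    (hy1 : (m : ℝ) / 2 ^ l ≤ x) (hy2 : x < ((m : ℝ) + 1) / 2 ^ l) :
    Set.Ico ((m : ℝ) / 2 ^ l) (((m : ℝ) + 1) / 2 ^ l) ⊆
      Set.Ico ((i : ℝ) / 2 ^ k) (((i : ℝ) + 1) / 2 ^ k) := by
  obtain ⟨d, rfl⟩ := Nat.exists_eq_add_of_le hkl
  have h2k : (0:ℝ) < 2 ^ k := by positivity
  have h2l : (0:ℝ) < 2 ^ (k + d) := by positivity
  -- i * 2^d ≤ m
  have h1 : (i : ℝ) / 2 ^ k < ((m : ℝ) + 1) / 2 ^ (k + d) := lt_of_le_of_lt hx1 hy2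
  have h1' : (i : ℝ) * 2 ^ (k + d) < ((m : ℝ) + 1) * 2 ^ k := by
    rw [div_lt_div_iff₀ h2k h2l] at h1; linarith
  have h1'' : i * 2 ^ d < m + 1 := by
    have : (↑(i * 2 ^ d) : ℝ) * 2 ^ k < (↑(m + 1) : ℝ) * 2 ^ k := by
      push_cast; rw [pow_add] at h1'; linarith
    exact_mod_cast lt_of_mul_lt_mul_right this (le_of_lt h2k)
  have hle1 : i * 2 ^ d ≤ m := by omega
  -- m + 1 ≤ (i+1) * 2^d
  have h2 : (m : ℝ) / 2 ^ (k + d) < ((i : ℝ) + 1) / 2 ^ k := lt_of_le_of_lt hy1 hx2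
  have h2' : (m : ℝ) * 2 ^ k < ((i : ℝ) + 1) * 2 ^ (k + d) := by
    rw [div_lt_div_iff₀ h2l h2k] at h2; linarith
  have h2'' : m < (i + 1) * 2 ^ d := by
    have : (↑m : ℝ) * 2 ^ k < (↑((i + 1) * 2 ^ d) : ℝ) * 2 ^ k := by
      push_cast; rw [pow_add] at h2'; linarith
    exact_mod_cast lt_of_mul_lt_mul_right this (le_of_lt h2k)
  have hle2 : m + 1 ≤ (i + 1) * 2 ^ d := by omega
  -- conclude
  have ha : (i : ℝ) / 2 ^ k ≤ (m : ℝ) / 2 ^ (k + d) := by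
    rw [div_le_div_iff₀ h2k h2l]
    calc (i:ℝ) * 2 ^ (k+d) = ((i * 2^d : ℤ) : ℝ) * 2 ^ k := by push_cast; rw [pow_add]; ring
    _ ≤ (m:ℝ) * 2 ^ k := by
        have : ((i * 2^d : ℤ) : ℝ) ≤ (m : ℝ) := by exact_mod_cast hle1
        nlinarith
  have hb : ((m : ℝ) + 1) / 2 ^ (k + d) ≤ ((i : ℝ) + 1) / 2 ^ k := by
    rw [div_le_div_iff₀ h2l h2k]
    calc ((m:ℝ)+1) * 2 ^ k = ((m + 1 : ℤ) : ℝ) * 2 ^ k := by push_cast; ring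
    _ ≤ (((i+1) * 2^d : ℤ) : ℝ) * 2 ^ k := by
        have : ((m + 1 : ℤ) : ℝ) ≤ (((i+1) * 2^d : ℤ) : ℝ) := by exact_mod_cast hle2
        nlinarith
    _ = ((i:ℝ)+1) * 2 ^ (k+d) := by push_cast; rw [pow_add]; ring
  exact Set.Ico_subset_Ico ha hb

/-- Laminarity of canonical squares. -/
lemma laminar {k l : ℕ} {σ τ : Set (ℝ × ℝ)} (hσ : IsCanSqSide k σ) (hτ : IsCanSqSide l τ)
    (hkl : k ≤ l) (hne : (σ ∩ τ).Nonempty) : τ ⊆ σ := by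
  obtain ⟨i, j, _, _, _, _, rfl⟩ := hσ
  obtain ⟨m, p, _, _, _, _, rfl⟩ := hτ
  obtain ⟨x, hx, hy⟩ := hne
  obtain ⟨hx1, hx2⟩ := hx
  obtain ⟨hy1, hy2⟩ := hy
  intro z hz
  exact ⟨ico_dyadic hkl hx1.1 hx1.2 hy1.1 hy1.2 hz.1, ico_dyadic hkl hx2.1 hx2.2 hy2.1 hy2.2 hz.2⟩

lemma laminar' {σ τ : Set (ℝ × ℝ)} (hσ : IsCanSq σ) (hτ : IsCanSq τ)
    (hne : (σ ∩ τ).Nonempty) : σ ⊆ τ ∨ τ ⊆ σ := by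
  obtain ⟨k, hσ⟩ := hσ
  obtain ⟨l, hτ⟩ := hτ
  rcases le_total k l with h | h
  · exact Or.inr (laminar hσ hτ h hne)
  · exact Or.inl (laminar hτ hσ h (by rwa [Set.inter_comm]))

/-- Diameter bound: two points of a canonical square of side `2⁻ᵏ` are within `2⁻ᵏ` in each coordinate. -/
lemma diam_bound {k : ℕ} {σ : Set (ℝ × ℝ)} (hσ : IsCanSqSide k σ) {p q : ℝ × ℝ}
    (hp : p ∈ σ) (hq : q ∈ σ) : |p.1 - q.1| < (2: ℝ)⁻¹ ^ k ∧ |p.2 - q.2| < (2:ℝ)⁻¹ ^ k := by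
  obtain ⟨i, j, _, _, _, _, rfl⟩ := hσ
  obtain ⟨⟨a1, a2⟩, ⟨a3, a4⟩⟩ := hp
  obtain ⟨⟨b1, b2⟩, ⟨b3, b4⟩⟩ := hq
  have h2k : (0:ℝ) < 2 ^ k := by positivity
  have e : (2:ℝ)⁻¹ ^ k = ((i:ℝ)+1)/2^k - (i:ℝ)/2^k := by
    field_simp
    rw [← mul_pow]; norm_num
  have e2 : (2:ℝ)⁻¹ ^ k = ((j:ℝ)+1)/2^k - (j:ℝ)/2^k := by
    field_simp
    rw [← mul_pow]; norm_num
  constructor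
  · rw [abs_lt]; constructor <;> [rw [e]; rw [e]] <;> linarith
  · rw [abs_lt]; constructor <;> [rw [e2]; rw [e2]] <;> linarith

end Geometry
section Smallest

lemma exists_smallest {T : Set (ℝ × ℝ)} (hTU : T ⊆ unitSq) {p q : ℝ × ℝ}
    (hp : p ∈ T) (hq : q ∈ T) (hpq : p ≠ q) : ∃ σ, IsSmallestCanSq T σ := by
  classical
  set D : Set ℕ := {k | ∃ σ, IsCanSqSide k σ ∧ T ⊆ σ} with hD
  have h0 : 0 ∈ D := ⟨unitSq, ⟨0, 0, le_refl _, by norm_num, le_refl _, by norm_num, unitSq_eq⟩, hTU⟩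
  have hδ : 0 < max |p.1 - q.1| |p.2 - q.2| := by
    by_contra h
    push_neg at h
    have h1 : |p.1 - q.1| ≤ 0 := le_trans (le_max_left _ _) h
    have h2 : |p.2 - q.2| ≤ 0 := le_trans (le_max_right _ _) h
    have e1 := abs_eq_zero.mp (le_antisymm h1 (abs_nonneg _))
    have e2 := abs_eq_zero.mp (le_antisymm h2 (abs_nonneg _))
    exact hpq (Prod.ext (by linarith) (by linarith))
  set δ := max |p.1 - q.1| |p.2 - q.2|
  obtain ⟨N, hN⟩ := exists_pow_lt_of_lt_one hδ (by norm_num : (2:ℝ)⁻¹ < 1)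
  have hbdd : ∀ k ∈ D, k ≤ N := by
    intro k hk
    obtain ⟨σ, hσ, hTσ⟩ := hk
    obtain ⟨d1, d2⟩ := diam_bound hσ (hTσ hp) (hTσ hq)
    have hδk : δ < (2:ℝ)⁻¹ ^ k := max_lt d1 d2
    by_contra h
    push_neg at h
    have : (2:ℝ)⁻¹ ^ k ≤ (2:ℝ)⁻¹ ^ N :=
      pow_le_pow_of_le_one (by norm_num) (by norm_num) (le_of_lt h)
    linarith
  have hne : D.Nonempty := ⟨0, h0⟩
  have hbd : BddAbove D := ⟨N, hbdd⟩
  have hmem : sSup D ∈ D := Nat.sSup_mem hne hbd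
  obtain ⟨σ, hσ, hTσ⟩ := hmem
  refine ⟨σ, ⟨_, hσ⟩, hTσ, ?_⟩
  intro τ hτ hTτ
  obtain ⟨l, hτl⟩ := hτ
  exact laminar hτl hσ (le_csSup hbd (⟨τ, hτl, hTτ⟩ : l ∈ D)) ⟨p, hTτ hp, hTσ hp⟩

lemma smallest_unique {T σ σ' : Set (ℝ × ℝ)} (h : IsSmallestCanSq T σ)
    (h' : IsSmallestCanSq T σ') : σ = σ' :=
  Set.Subset.antisymm (h.2.2 σ' h'.1 h'.2.1) (h'.2.2 σ h.1 h.2.1)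

lemma smallestCanSq_eq {T σ : Set (ℝ × ℝ)} (h : IsSmallestCanSq T σ) :
    smallestCanSq T = σ := by
  rw [smallestCanSq, dif_pos ⟨σ, h⟩]
  exact smallest_unique (Exists.choose_spec (⟨σ, h⟩ : ∃ σ, IsSmallestCanSq T σ)) h

lemma isSmallest_smallestCanSq {T : Set (ℝ × ℝ)} (hTU : T ⊆ unitSq) (hfin : T.Finite)
    (h2 : 2 ≤ T.ncard) : IsSmallestCanSq T (smallestCanSq T) := by
  obtain ⟨p, hp, q, hq, hpq⟩ := (Set.one_lt_ncard hfin).mp h2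
  obtain ⟨σ, hσ⟩ := exists_smallest hTU hp hq hpq
  rw [smallestCanSq_eq hσ]; exact hσ

/-- At most one point whose removal changes the smallest canonical square. -/
lemma atMostOneBad {T : Set (ℝ × ℝ)} (hTU : T ⊆ unitSq) (hfin : T.Finite)
    (h3 : 3 ≤ T.ncard) {σ₀ : Set (ℝ × ℝ)} (h₀ : IsSmallestCanSq T σ₀) :
    ∃ x₁ : ℝ × ℝ, ∀ x, ¬ IsSmallestCanSq (T \ {x}) σ₀ → x = x₁ := by
  classical
  by_cases hex : ∃ x, ¬ IsSmallestCanSq (T \ {x}) σ₀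
  · obtain ⟨x₁, hx₁⟩ := hex
    refine ⟨x₁, fun x hx => ?_⟩
    by_contra hne
    have key : ∀ y : ℝ × ℝ, ¬ IsSmallestCanSq (T \ {y}) σ₀ →
        y ∈ T ∧ ∃ σy, IsSmallestCanSq (T \ {y}) σy ∧ σy ⊆ σ₀ ∧ σy ≠ σ₀ := by
      intro y hy
      have hyT : y ∈ T := by
        by_contra hyT
        rw [Set.diff_singleton_eq_self hyT] at hy
        exact hy h₀
      have hsub : T \ {y} ⊆ unitSq := fun z hz => hTU hz.1
      have h2 : 2 ≤ (T \ {y}).ncard := by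
        have := Set.pred_ncard_le_ncard_diff_singleton T y
        omega
      obtain ⟨p, hp, q, hq, hpq⟩ := (Set.one_lt_ncard (hfin.diff)).mp h2
      obtain ⟨σy, hσy⟩ := exists_smallest hsub hp hq hpq
      refine ⟨hyT, σy, hσy, hσy.2.2 σ₀ h₀.1 (fun z hz => h₀.2.1 hz.1), fun he => hy (he ▸ hσy)⟩
    obtain ⟨hxT, σx, hσx, hσx0, hσxne⟩ := key x hx
    obtain ⟨hx1T, σ1, hσ1, hσ10, hσ1ne⟩ := key x₁ hx₁
    have hz : (T \ {x, x₁}).Nonempty := by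
      rw [Set.nonempty_iff_ne_empty]
      intro he
      have hsub : T ⊆ {x, x₁} := fun z hzT => by
        by_contra hzn; exact Set.notMem_empty z (he ▸ ⟨hzT, hzn⟩)
      have h1 := Set.ncard_le_ncard hsub (Set.toFinite _)
      have h2 : ({x, x₁} : Set (ℝ × ℝ)).ncard ≤ 2 :=
        (Set.ncard_insert_le _ _).trans (by simp)
      omega
    obtain ⟨z, hzT, hzn⟩ := hz
    have hnex : (σx ∩ σ1).Nonempty :=
      ⟨z, hσx.2.1 ⟨hzT, fun h => hzn (by simp at h; simp [h])⟩,
        hσ1.2.1 ⟨hzT, fun h => hzn (by simp at h; simp [h])⟩⟩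
    have main : ∀ a b : ℝ × ℝ, a ≠ b → a ∈ T → b ∈ T →
        ∀ σa σb : Set (ℝ × ℝ), IsSmallestCanSq (T \ {a}) σa → IsSmallestCanSq (T \ {b}) σb →
        σb ⊆ σ₀ → σb ≠ σ₀ → σa ⊆ σb → False := by
      intro a b hab haT hbT σa σb hσa hσb hb0 hbne hss
      have hTs : T ⊆ σb := by
        intro w hw
        by_cases hwb : w = b
        · subst hwb
          exact hss (hσa.2.1 ⟨hw, fun h => hab (by simpa using h.symm)⟩)
        · exact hσb.2.1 ⟨hw, hwb⟩
      exact hbne (Set.Subset.antisymm hb0 (h₀.2.2 σb hσb.1 hTs))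
    rcases laminar' hσx.1 hσ1.1 hnex with hss | hss
    · exact main x x₁ hne hxT hx1T σx σ1 hσx hσ1 hσ10 hσ1ne hss
    · exact main x₁ x (fun h => hne h.symm) hx1T hxT σ1 σx hσ1 hσx hσx0 hσxne hss
  · push_neg at hex
    exact ⟨0, fun x hx => absurd (hex x) (by simp [hx])⟩

end Smallest
section Key

lemma key_bad_bound {S : Set (ℝ × ℝ)} (hSU : S ⊆ unitSq) (hfin : S.Finite)
    (h5 : 5 ≤ S.ncard) {f : Set (ℝ × ℝ)} (hf : f ∈ QT S) :
    ∃ x₁ x₂ x₃ x₄ : ℝ × ℝ, ∀ x ∈ S, f ∉ QT (S \ {x}) →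
      x = x₁ ∨ x = x₂ ∨ x = x₃ ∨ x = x₄ := by
  classical
  rcases hf with ⟨h1, _⟩ | ⟨h2, hneU, hfe⟩ | ⟨σ, q, hcrit, hquad, hcase⟩
  · omega
  · -- annulus at the root
    have hsm : IsSmallestCanSq S (smallestCanSq S) :=
      isSmallest_smallestCanSq hSU hfin (by omega)
    obtain ⟨x₁, hx₁⟩ := atMostOneBad hSU hfin (by omega) hsm
    refine ⟨x₁, x₁, x₁, x₁, fun x hxS hbad => ?_⟩
    by_contra hne
    push_neg at hne
    have hxne : x ≠ x₁ := hne.1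
    have hsmx : IsSmallestCanSq (S \ {x}) (smallestCanSq S) := by
      by_contra h; exact hxne (hx₁ x h)
    refine hbad (Or.inr (Or.inl ⟨?_, ?_, ?_⟩))
    · rw [Set.ncard_diff_singleton_of_mem hxS]; omega
    · rw [smallestCanSq_eq hsmx]; exact hneU
    · rw [smallestCanSq_eq hsmx]; exact hfe
  · obtain ⟨hcanσ, q₁, q₂, hq1, hq2, hq12, ⟨a, haS, haq1⟩, ⟨b, hbS, hbq2⟩⟩ := hcrit
    have crit' : ∀ x : ℝ × ℝ, x ≠ a → x ≠ b → Critical (S \ {x}) σ := by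
      intro x hxa hxb
      exact ⟨hcanσ, q₁, q₂, hq1, hq2, hq12,
        ⟨a, ⟨haS, fun h => hxa (by simpa using h.symm)⟩, haq1⟩,
        ⟨b, ⟨hbS, fun h => hxb (by simpa using h.symm)⟩, hbq2⟩⟩
    rcases hcase with ⟨hT1, hfq⟩ | ⟨hT2, hTne, hfe⟩
    · -- square tile q
      refine ⟨a, b, a, b, fun x hxS hbad => ?_⟩
      by_contra hne
      push_neg at hne
      refine hbad (Or.inr (Or.inr ⟨σ, q, crit' x hne.1 hne.2.1, hquad, Or.inl ⟨?_, hfq⟩⟩))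
      have hsub : (S \ {x}) ∩ q ⊆ S ∩ q := fun z hz => ⟨hz.1.1, hz.2⟩
      exact le_trans (Set.ncard_le_ncard hsub (hfin.inter_of_left q)) hT1
    · -- annulus tile q \ sq(S ∩ q)
      set T := S ∩ q with hTdef
      have hTU : T ⊆ unitSq := fun z hz => hSU hz.1
      have hTfin : T.Finite := hfin.inter_of_left q
      have hsm1 : IsSmallestCanSq T (smallestCanSq T) :=
        isSmallest_smallestCanSq hTU hTfin hT2
      by_cases h3 : 3 ≤ T.ncard
      · obtain ⟨c, hc⟩ := atMostOneBad hTU hTfin h3 hsm1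
        refine ⟨a, b, c, c, fun x hxS hbad => ?_⟩
        by_contra hne
        push_neg at hne
        have hTx : (S \ {x}) ∩ q = T \ {x} := by
          ext z; simp only [hTdef, Set.mem_inter_iff, Set.mem_diff, Set.mem_singleton_iff]; tauto
        have hsmx : IsSmallestCanSq (T \ {x}) (smallestCanSq T) := by
          by_contra h; exact hne.2.2.1 (hc x h)
        refine hbad (Or.inr (Or.inr ⟨σ, q, crit' x hne.1 hne.2.1, hquad,
          Or.inr ⟨?_, ?_, ?_⟩⟩))
        · rw [hTx]
          have := Set.pred_ncard_le_ncard_diff_singleton T x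
          omega
        · rw [hTx, smallestCanSq_eq hsmx]; exact hTne
        · rw [hTx, smallestCanSq_eq hsmx]; exact hfe
      · obtain ⟨c, d, hcd, hTeq⟩ := Set.ncard_eq_two.mp (le_antisymm (by omega) hT2)
        refine ⟨a, b, c, d, fun x hxS hbad => ?_⟩
        by_contra hne
        push_neg at hne
        have hxT : x ∉ T := by
          rw [hTeq]; simp only [Set.mem_insert_iff, Set.mem_singleton_iff]
          push_neg; exact ⟨hne.2.2.1, hne.2.2.2⟩
        have hTx : (S \ {x}) ∩ q = T := by
          ext z
          simp only [hTdef, Set.mem_inter_iff, Set.mem_diff, Set.mem_singleton_iff]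
          constructor
          · rintro ⟨⟨h1, _⟩, h2⟩; exact ⟨h1, h2⟩
          · rintro ⟨h1, h2⟩
            exact ⟨⟨h1, fun h => hxT (h ▸ ⟨h1, h2⟩)⟩, h2⟩
        refine hbad (Or.inr (Or.inr ⟨σ, q, crit' x hne.1 hne.2.1, hquad,
          Or.inr ⟨?_, ?_, ?_⟩⟩)) <;> rw [hTx]
        exacts [hT2, hTne, hfe]

end Key
section Prefix

variable {n : ℕ} {P : Finset (ℝ × ℝ)}

lemma prefix_eq_image (π : Fin n ≃ {x // x ∈ P}) (j : ℕ) :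
    prefixSet n P π j =
      (fun t : Fin n => ((π t : {x // x ∈ P}) : ℝ × ℝ)) '' {t : Fin n | (t : ℕ) < j} := by
  ext x
  constructor
  · rintro ⟨t, h1, h2⟩; exact ⟨t, h1, h2⟩
  · rintro ⟨t, h1, h2⟩; exact ⟨t, h1, h2⟩

lemma prefix_finite (π : Fin n ≃ {x // x ∈ P}) (j : ℕ) : (prefixSet n P π j).Finite := by
  rw [prefix_eq_image]; exact (Set.toFinite _).image _

lemma prefix_subU (hPU : ∀ x ∈ P, x ∈ unitSq) (π : Fin n ≃ {x // x ∈ P}) (j : ℕ) :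
    prefixSet n P π j ⊆ unitSq := by
  rintro x ⟨t, _, rfl⟩; exact hPU _ (π t).2

lemma coe_pi_injective (π : Fin n ≃ {x // x ∈ P}) :
    Function.Injective (fun t : Fin n => ((π t : {x // x ∈ P}) : ℝ × ℝ)) :=
  Subtype.coe_injective.comp π.injective

lemma card_filter_lt {n j : ℕ} (hj : j ≤ n) :
    ((Finset.univ : Finset (Fin n)).filter (fun t : Fin n => (t : ℕ) < j)).card = j := by
  have himg : (Finset.univ : Finset (Fin n)).filter (fun t : Fin n => (t : ℕ) < j) =
      (Finset.univ : Finset (Fin j)).image (Fin.castLE hj) := by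
    ext t
    simp only [Finset.mem_filter, Finset.mem_univ, true_and, Finset.mem_image]
    constructor
    · intro h; exact ⟨⟨(t : ℕ), h⟩, rfl⟩
    · rintro ⟨s, rfl⟩; exact s.2
  rw [himg, Finset.card_image_of_injective _ (Fin.castLE_injective hj),
    Finset.card_univ, Fintype.card_fin]

lemma prefix_ncard (π : Fin n ≃ {x // x ∈ P}) {j : ℕ} (hj : j ≤ n) :
    (prefixSet n P π j).ncard = j := by
  rw [prefix_eq_image, Set.ncard_image_of_injective _ (coe_pi_injective π)]
  have : {t : Fin n | (t : ℕ) < j} =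
      (((Finset.univ : Finset (Fin n)).filter (fun t : Fin n => (t : ℕ) < j) : Finset (Fin n)) :
        Set (Fin n)) := by
    ext t; simp
  rw [this, Set.ncard_coe_finset]
  exact card_filter_lt hj

lemma prefix_pred (π : Fin n ≃ {x // x ∈ P}) {i : ℕ} (hi1 : 1 ≤ i) (hin : i ≤ n) :
    prefixSet n P π (i - 1) =
      prefixSet n P π i \ {((π ⟨i - 1, by omega⟩ : {x // x ∈ P}) : ℝ × ℝ)} := by
  ext x
  simp only [prefixSet, Set.mem_setOf_eq, Set.mem_diff, Set.mem_singleton_iff]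
  constructor
  · rintro ⟨t, ht, rfl⟩
    refine ⟨⟨t, by omega, rfl⟩, fun h => ?_⟩
    have h2 : t = (⟨i - 1, by omega⟩ : Fin n) := π.injective (Subtype.coe_injective h)
    have h3 := congrArg Fin.val h2
    simp at h3; omega
  · rintro ⟨⟨t, ht, rfl⟩, hne⟩
    refine ⟨t, ?_, rfl⟩
    have hvt : (t : ℕ) ≠ i - 1 := by
      intro h
      exact hne (congrArg (fun s : Fin n => ((π s : {x // x ∈ P}) : ℝ × ℝ))
        (Fin.ext (by simpa using h)))
    omega

lemma prefix_swap (π : Fin n ≃ {x // x ∈ P}) {i : ℕ} (hin : i ≤ n)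
    {t l : Fin n} (ht : (t : ℕ) < i) (hl : (l : ℕ) < i) :
    prefixSet n P ((Equiv.swap t l).trans π) i = prefixSet n P π i := by
  have hmaps : ∀ s : Fin n, (s : ℕ) < i → ((Equiv.swap t l s : Fin n) : ℕ) < i := by
    intro s hs
    by_cases h1 : s = t
    · rw [h1, Equiv.swap_apply_left]; exact hl
    by_cases h2 : s = l
    · rw [h2, Equiv.swap_apply_right]; exact ht
    · rw [Equiv.swap_apply_of_ne_of_ne h1 h2]; exact hs
  ext x
  simp only [prefixSet, Set.mem_setOf_eq, Equiv.trans_apply]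
  constructor
  · rintro ⟨s, hs, rfl⟩
    exact ⟨Equiv.swap t l s, hmaps s hs, rfl⟩
  · rintro ⟨s, hs, rfl⟩
    refine ⟨Equiv.swap t l s, hmaps s hs, ?_⟩
    rw [Equiv.swap_apply_self]

end Prefix


/-- Probability that a tile is created in the `i`-th iteration: for a uniformly
random bijection `π : {1, …, n} → P` and `P_j = {π(1), …, π(j)}`,
`Pr[f ∈ QT(P_i) ∧ f ∉ QT(P_{i-1})] ≤ (4 / i) · Pr[f ∈ QT(P_i)]`. -/
theorem prob_tile_created (n : ℕ) (P : Finset (ℝ × ℝ)) (hcard : P.card = n)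
    (hPU : ∀ x ∈ P, x ∈ unitSq) (f : Set (ℝ × ℝ)) (i : ℕ) (hi1 : 1 ≤ i) (hin : i ≤ n) :
    (((Finset.univ : Finset (Fin n ≃ {x // x ∈ P})).filter
          (fun π => f ∈ QT (prefixSet n P π i) ∧ f ∉ QT (prefixSet n P π (i - 1)))).card : ℝ)
        / (((Finset.univ : Finset (Fin n ≃ {x // x ∈ P})).card : ℝ))
      ≤ (4 / (i : ℝ)) *
        ((((Finset.univ : Finset (Fin n ≃ {x // x ∈ P})).filter
              (fun π => f ∈ QT (prefixSet n P π i))).card : ℝ)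
          / (((Finset.univ : Finset (Fin n ≃ {x // x ∈ P})).card : ℝ))) := by
  classical
  have hGne : Nonempty (Fin n ≃ {x // x ∈ P}) := by
    have hc : Fintype.card {x // x ∈ P} = n := by rw [Fintype.card_coe, hcard]
    exact ⟨(Fintype.equivFinOfCardEq hc).symm⟩
  have hcpos : 0 < ((Finset.univ : Finset (Fin n ≃ {x // x ∈ P})).card) :=
    Finset.card_pos.mpr Finset.univ_nonempty
  set TAB := (Finset.univ : Finset (Fin n ≃ {x // x ∈ P})).filter
      (fun π => f ∈ QT (prefixSet n P π i) ∧ f ∉ QT (prefixSet n P π (i - 1))) with hTAB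
  set TA := (Finset.univ : Finset (Fin n ≃ {x // x ∈ P})).filter
      (fun π => f ∈ QT (prefixSet n P π i)) with hTA
  have hkey : i * TAB.card ≤ 4 * TA.card := by
    by_cases hsmall : i ≤ 4
    · have hsub : TAB ⊆ TA := by
        intro π hπ
        rw [hTAB, Finset.mem_filter] at hπ
        rw [hTA, Finset.mem_filter]
        exact ⟨hπ.1, hπ.2.1⟩
      exact Nat.mul_le_mul hsmall (Finset.card_le_card hsub)
    · push_neg at hsmall
      have h5 : 5 ≤ i := hsmall
      set l : Fin n := ⟨i - 1, by omega⟩ with hl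
      have hlval : (l : ℕ) < i := by rw [hl]; simp; omega
      set I := (Finset.univ : Finset (Fin n)).filter (fun t : Fin n => (t : ℕ) < i) with hI
      have hIcard : I.card = i := card_filter_lt hin
      set Φ : (Fin n ≃ {x // x ∈ P}) × Fin n → (Fin n ≃ {x // x ∈ P}) × Fin n :=
        fun p => ((Equiv.swap p.2 l).trans p.1, p.2) with hΦ
      have hΦΦ : ∀ p, Φ (Φ p) = p := by
        rintro ⟨π, t⟩
        simp only [hΦ]
        rw [← Equiv.trans_assoc, Equiv.swap_swap, Equiv.refl_trans]
      set BP := ((TA ×ˢ I).filter (fun p : (Fin n ≃ {x // x ∈ P}) × Fin n =>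
          f ∉ QT (prefixSet n P p.1 i \ {((p.1 p.2 : {x // x ∈ P}) : ℝ × ℝ)}))) with hBP
      have hmaps : ∀ p ∈ TAB ×ˢ I, Φ p ∈ BP := by
        rintro ⟨π, t⟩ hp
        rw [Finset.mem_product] at hp
        obtain ⟨hπ, htI⟩ := hp
        have ht : (t : ℕ) < i := by
          have h := htI; rw [hI, Finset.mem_filter] at h; exact h.2
        rw [hTAB, Finset.mem_filter] at hπ
        obtain ⟨-, hA, hB⟩ := hπ
        have hpre : prefixSet n P ((Equiv.swap t l).trans π) i = prefixSet n P π i :=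
          prefix_swap π hin ht hlval
        rw [hBP, Finset.mem_filter, Finset.mem_product]
        refine ⟨⟨?_, htI⟩, ?_⟩
        · rw [hTA, Finset.mem_filter]
          refine ⟨Finset.mem_univ _, ?_⟩
          show f ∈ QT (prefixSet n P ((Equiv.swap t l).trans π) i)
          rw [hpre]; exact hA
        · show f ∉ QT (prefixSet n P ((Equiv.swap t l).trans π) i \
            {((((Equiv.swap t l).trans π) t : {x // x ∈ P}) : ℝ × ℝ)})
          have happ : (((Equiv.swap t l).trans π) t : {x // x ∈ P}) = π l := by
            simp [Equiv.swap_apply_left]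
          rw [hpre, happ, ← prefix_pred π hi1 hin]
          exact hB
      have hinj : Set.InjOn Φ ↑(TAB ×ˢ I) := fun p _ q _ h => by
        rw [← hΦΦ p, h, hΦΦ q]
      have hcard1 : (TAB ×ˢ I).card ≤ BP.card :=
        Finset.card_le_card_of_injOn Φ hmaps hinj
      have hBPle : BP.card ≤ TA.card * 4 := by
        rw [hBP, Finset.card_filter, Finset.sum_product]
        have hinner : ∀ π ∈ TA,
            (∑ t ∈ I, if f ∉ QT (prefixSet n P π i \ {((π t : {x // x ∈ P}) : ℝ × ℝ)})
              then 1 else 0) ≤ 4 := by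
          intro π hπ
          have hA : f ∈ QT (prefixSet n P π i) := by
            rw [hTA, Finset.mem_filter] at hπ; exact hπ.2
          rw [← Finset.card_filter]
          obtain ⟨x₁, x₂, x₃, x₄, hx⟩ := key_bad_bound (prefix_subU hPU π i)
            (prefix_finite π i) (by rw [prefix_ncard π hin]; omega) hA
          have hsub : I.filter (fun t => f ∉ QT (prefixSet n P π i \
              {((π t : {x // x ∈ P}) : ℝ × ℝ)})) ⊆
              (Finset.univ : Finset (Fin n)).filter (fun t =>
                ((π t : {x // x ∈ P}) : ℝ × ℝ) ∈ ({x₁, x₂, x₃, x₄} : Finset (ℝ × ℝ))) := by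
            intro t ht
            rw [Finset.mem_filter] at ht
            obtain ⟨htI, hbad⟩ := ht
            have htv : (t : ℕ) < i := by
              rw [hI, Finset.mem_filter] at htI; exact htI.2
            have hmem : ((π t : {x // x ∈ P}) : ℝ × ℝ) ∈ prefixSet n P π i := ⟨t, htv, rfl⟩
            have := hx _ hmem hbad
            rw [Finset.mem_filter]
            refine ⟨Finset.mem_univ _, ?_⟩
            simp only [Finset.mem_insert, Finset.mem_singleton]
            tauto
          have h2 : ((Finset.univ : Finset (Fin n)).filter (fun t =>
              ((π t : {x // x ∈ P}) : ℝ × ℝ) ∈ ({x₁, x₂, x₃, x₄} : Finset (ℝ × ℝ)))).card ≤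
              ({x₁, x₂, x₃, x₄} : Finset (ℝ × ℝ)).card :=
            Finset.card_le_card_of_injOn (fun t => ((π t : {x // x ∈ P}) : ℝ × ℝ))
              (fun t ht => (Finset.mem_filter.mp ht).2) ((coe_pi_injective π).injOn)
          have h4 : ({x₁, x₂, x₃, x₄} : Finset (ℝ × ℝ)).card ≤ 4 := by
            have a := Finset.card_insert_le x₁ ({x₂, x₃, x₄} : Finset (ℝ × ℝ))
            have b := Finset.card_insert_le x₂ ({x₃, x₄} : Finset (ℝ × ℝ))
            have c := Finset.card_insert_le x₃ ({x₄} : Finset (ℝ × ℝ))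
            simp only [Finset.card_singleton] at *
            omega
          exact le_trans (Finset.card_le_card hsub) (le_trans h2 h4)
        calc (∑ π ∈ TA, ∑ t ∈ I,
            if f ∉ QT (prefixSet n P π i \ {((π t : {x // x ∈ P}) : ℝ × ℝ)}) then 1 else 0)
            ≤ ∑ _π ∈ TA, 4 := Finset.sum_le_sum hinner
          _ = TA.card * 4 := by rw [Finset.sum_const, smul_eq_mul]
      have : TAB.card * i ≤ TA.card * 4 := by
        calc TAB.card * i = (TAB ×ˢ I).card := by rw [Finset.card_product, hIcard]
          _ ≤ BP.card := hcard1
          _ ≤ TA.card * 4 := hBPle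
      rw [Nat.mul_comm i, Nat.mul_comm 4]
      exact this
  have hc : (0 : ℝ) < (((Finset.univ : Finset (Fin n ≃ {x // x ∈ P})).card : ℝ)) := by
    exact_mod_cast hcpos
  have hipos : (0 : ℝ) < (i : ℝ) := by exact_mod_cast hi1
  have hkeyR : (i : ℝ) * (TAB.card : ℝ) ≤ 4 * (TA.card : ℝ) := by exact_mod_cast hkey
  rw [div_mul_div_comm, div_le_div_iff₀ hc (by positivity)]
  calc (TAB.card : ℝ) * ((i : ℝ) * ((Finset.univ : Finset (Fin n ≃ {x // x ∈ P})).card : ℝ))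
      = ((i : ℝ) * (TAB.card : ℝ)) * ((Finset.univ : Finset (Fin n ≃ {x // x ∈ P})).card : ℝ) := by
        ring
    _ ≤ (4 * (TA.card : ℝ)) * ((Finset.univ : Finset (Fin n ≃ {x // x ∈ P})).card : ℝ) :=
        mul_le_mul_of_nonneg_right hkeyR hc.le
    _ = 4 * (TA.card : ℝ) * ((Finset.univ : Finset (Fin n ≃ {x // x ∈ P})).card : ℝ) := rfl
end
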